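/- Let ℓ₁, ℓ₂ be positive integers, 𝓛 the linear functional with 𝓛(((1-x)/2)^m) = (-ℓ₁)_m/(-ℓ₁-ℓ₂)_m for 0 ≤ m ≤ ℓ₁+ℓ₂, and Gₙ(x) = Σ_{k=0}^{n} (-n)_k (n-ℓ₁-ℓ₂-1)_k / ((-ℓ₁)_k k!) ((1-x)/2)^k for n ≤ min(ℓ₁,ℓ₂). Then for 0 ≤ m < n ≤ min(ℓ₁,ℓ₂), 𝓛(Gₙ(x)·((1-x)/2)^m) = 0, and 𝓛(Gₙ(x)·((1-x)/2)^n) = (-1)ⁿ n! (-ℓ₂)ₙ / (-ℓ₁-ℓ₂)_{2n}. -/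

import Mathlib

open Polynomial

/-- Pochhammer symbol `(a)_n = a(a+1)⋯(a+n-1)`. -/
def poch {R : Type*} [CommRing R] (a : R) (n : ℕ) : R :=
  ∏ i ∈ Finset.range n, (a + i)


section AuxLemmas
open Finset

-- basic poch lemmas
lemma poch_add {R : Type*} [CommRing R] (a : R) (s t : ℕ) :
    poch a (s + t) = poch a s * poch (a + s) t := by
  rw [poch, Finset.prod_range_add, ← poch]
  congr 1
  refine Finset.prod_congr rfl fun i _ => ?_
  push_cast; ring

lemma poch_ne_zero {a k : ℕ} (h : k ≤ a) : poch (-(a:ℚ)) k ≠ 0 := by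
  rw [poch]
  refine Finset.prod_ne_zero_iff.mpr fun i hi => ?_
  have hi' : i < a := lt_of_lt_of_le (Finset.mem_range.mp hi) h
  have : (i:ℚ) < a := by exact_mod_cast hi'
  intro hc; nlinarith

-- descending factorial product
lemma prod_desc (d b : ℕ) :
    ∏ i ∈ Finset.range d, (((b + d : ℕ) : ℚ) - i) = (b + d).factorial / b.factorial := by
  induction d generalizing b with
  | zero =>
    have hb : (b.factorial : ℚ) ≠ 0 := by exact_mod_cast b.factorial_ne_zero
    simp [div_self hb]
  | succ d ih =>
    rw [Finset.prod_range_succ]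
    have h1 : ∀ i ∈ Finset.range d, (((b + (d+1) : ℕ) : ℚ) - i) = ((((b+1) + d : ℕ) : ℚ) - i) := by
      intro i _; push_cast; ring
    rw [Finset.prod_congr rfl h1, ih (b+1)]
    have h2 : (((b + (d+1) : ℕ) : ℚ) - d) = ((b:ℚ) + 1) := by push_cast; ring
    rw [h2]
    have h3 : (b + (d+1)).factorial = (b + 1 + d).factorial := by ring_nf
    rw [h3]
    have hb : (b.factorial : ℚ) ≠ 0 := by exact_mod_cast b.factorial_ne_zero
    have hb1 : ((b+1).factorial : ℚ) ≠ 0 := by exact_mod_cast (b+1).factorial_ne_zero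
    rw [Nat.factorial_succ b]
    push_cast
    field_simp

lemma poch_neg_nat {a k : ℕ} (h : k ≤ a) :
    poch (-(a:ℚ)) k = (-1)^k * (a.factorial / (a - k).factorial) := by
  have h1 : ∀ i ∈ Finset.range k, (-(a:ℚ) + i) = -((a:ℚ) - i) := by intro i _; ring
  have h1' : ∀ i ∈ Finset.range k, (-(a:ℚ) + i) = (-1) * ((a:ℚ) - i) := by intro i _; ring
  rw [poch, Finset.prod_congr rfl h1', Finset.prod_mul_distrib, Finset.prod_const,
    Finset.card_range]
  have h2 : ∀ i ∈ Finset.range k, ((a:ℚ) - i) = ((((a - k) + k : ℕ):ℚ) - i) := by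
    intro i _; congr 1; exact_mod_cast (Nat.sub_add_cancel h).symm
  rw [Finset.prod_congr rfl h2, prod_desc, Nat.sub_add_cancel h]

lemma poch_neg_nat_choose {n k : ℕ} (h : k ≤ n) :
    poch (-(n:ℚ)) k = (-1)^k * k.factorial * n.choose k := by
  rw [poch_neg_nat h]
  have := Nat.choose_mul_factorial_mul_factorial h
  have hnk : ((n-k).factorial : ℚ) ≠ 0 := by exact_mod_cast (n-k).factorial_ne_zero
  field_simp
  rw [← this]; push_cast; ring

lemma pascal_sum (n : ℕ) (f : ℕ → ℚ) :
    ∑ k ∈ Finset.range (n+2), (-1:ℚ)^k * ((n+1).choose k) * f k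
    = ∑ k ∈ Finset.range (n+1), (-1:ℚ)^k * (n.choose k) * (f k - f (k+1)) := by
  rw [Finset.sum_range_succ' _ (n+1)]
  have h1 : ∀ k, (-1:ℚ)^(k+1) * (((n+1).choose (k+1) : ℚ)) * f (k+1)
      = -((-1:ℚ)^k * (n.choose k) * f (k+1)) + (-1:ℚ)^(k+1) * ((n.choose (k+1) : ℚ)) * f (k+1) := by
    intro k
    rw [Nat.choose_succ_succ]
    push_cast
    ring
  rw [Finset.sum_congr rfl (fun k _ => h1 k), Finset.sum_add_distrib]
  have h2 : (∑ k ∈ Finset.range (n+1), (-1:ℚ)^(k+1) * ((n.choose (k+1) : ℚ)) * f (k+1))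
      + (-1:ℚ)^0 * (((n+1).choose 0 : ℚ)) * f 0
      = ∑ k ∈ Finset.range (n+2), (-1:ℚ)^k * (n.choose k) * f k := by
    rw [Finset.sum_range_succ' (fun k => (-1:ℚ)^k * (n.choose k) * f k) (n+1)]
    simp
  have h3 : ∑ k ∈ Finset.range (n+2), (-1:ℚ)^k * (n.choose k) * f k
      = ∑ k ∈ Finset.range (n+1), (-1:ℚ)^k * (n.choose k) * f k := by
    rw [Finset.sum_range_succ]
    simp [Nat.choose_succ_self]
  rw [add_assoc, h2, h3, ← Finset.sum_add_distrib]
  refine Finset.sum_congr rfl fun k _ => ?_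
  ring

lemma degree_comp_shift_sub (P : ℚ[X]) : (P.comp (X + C 1) - P).degree < P.degree ∨ P.comp (X + C 1) - P = 0 := by
  by_cases hP : P.comp (X + C 1) - P = 0
  · right; exact hP
  · left
    have hPne : P ≠ 0 := by rintro rfl; simp at hP
    have hXd : ((X + C 1 : ℚ[X])).natDegree = 1 := natDegree_X_add_C 1
    have hlc : (P.comp (X + C 1)).leadingCoeff = P.leadingCoeff := by
      rw [leadingCoeff_comp (by rw [hXd]; norm_num), (monic_X_add_C (1:ℚ)).leadingCoeff,
        one_pow, mul_one]
    have hcne : P.comp (X + C 1) ≠ 0 := by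
      rw [← leadingCoeff_ne_zero] at hPne ⊢
      rwa [hlc]
    have hdc : (P.comp (X + C 1)).degree = P.degree := by
      have h1 : (P.comp (X + C 1)).natDegree = P.natDegree := by
        rw [natDegree_comp, hXd, mul_one]
      rw [degree_eq_natDegree hcne, degree_eq_natDegree hPne, h1]
    have := Polynomial.degree_sub_lt hdc hcne hlc
    rwa [hdc] at this

lemma alt_sum_poly (n : ℕ) (P : ℚ[X]) (hP : P.degree < n) :
    ∑ k ∈ Finset.range (n+1), (-1:ℚ)^k * (n.choose k) * P.eval (k:ℚ) = 0 := by
  induction n generalizing P with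
  | zero =>
    have : P = 0 := by
      rw [← degree_eq_bot]
      exact Nat.WithBot.lt_zero_iff.mp (by exact_mod_cast hP)
    simp [this]
  | succ n ih =>
    rw [pascal_sum n (fun k => P.eval (k:ℚ))]
    have key : ∀ k : ℕ, P.eval (k:ℚ) - P.eval ((k+1 : ℕ):ℚ) = (-(P.comp (X + C 1) - P)).eval (k:ℚ) := by
      intro k; push_cast; simp [eval_comp]
    rw [Finset.sum_congr rfl (fun k _ => by rw [key k])]
    apply ih
    rw [degree_neg]
    by_cases hz : P.comp (X + C 1) - P = 0
    · rw [hz, degree_zero]; exact WithBot.bot_lt_coe n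
    rcases degree_comp_shift_sub P with h | h
    · have hPne : P ≠ 0 := by
        intro hz2; rw [hz2] at h; simp at h
      have h1 : (P.comp (X + C 1) - P).natDegree < P.natDegree :=
        natDegree_lt_natDegree hz h
      have h2 : P.natDegree < n + 1 := (natDegree_lt_iff_degree_lt hPne).mpr (by exact_mod_cast hP)
      exact (natDegree_lt_iff_degree_lt hz).mp (by exact_mod_cast by omega)
    · exact absurd h hz

lemma alt_sum_inv (n : ℕ) : ∀ x : ℚ, (∀ i ∈ Finset.range (n+1), x - i ≠ 0) →
    ∑ k ∈ Finset.range (n+1), (-1:ℚ)^k * (n.choose k) / (x - k) =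
      (-1)^n * n.factorial / ∏ i ∈ Finset.range (n+1), (x - i) := by
  induction n with
  | zero => intro x hx; simp
  | succ n ih =>
    intro x hx
    have e1 : ∀ k, (-1:ℚ)^k * ((n+1).choose k) / (x - k)
        = (-1:ℚ)^k * ((n+1).choose k) * (fun k : ℕ => 1 / (x - k)) k := by
      intro k; simp; ring
    calc ∑ k ∈ Finset.range (n+2), (-1:ℚ)^k * ((n+1).choose k) / (x - k)
        = ∑ k ∈ Finset.range (n+2), (-1:ℚ)^k * (((n+1).choose k : ℚ)) * (fun k : ℕ => 1 / (x - k)) k := by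
          refine Finset.sum_congr rfl fun k _ => ?_
          push_cast
          ring
      _ = ∑ k ∈ Finset.range (n+1), (-1:ℚ)^k * (n.choose k) * (1 / (x - k) - 1 / (x - (k+1 : ℕ))) :=
          pascal_sum n _
      _ = (∑ k ∈ Finset.range (n+1), (-1:ℚ)^k * (n.choose k) / (x - k))
          - ∑ k ∈ Finset.range (n+1), (-1:ℚ)^k * (n.choose k) / ((x-1) - k) := by
          rw [← Finset.sum_sub_distrib]
          refine Finset.sum_congr rfl fun k _ => ?_
          have : x - ((k+1:ℕ):ℚ) = (x - 1) - k := by push_cast; ring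
          rw [this]
          ring
      _ = (-1)^(n+1) * (n+1).factorial / ∏ i ∈ Finset.range (n+2), (x - i) := by
          rw [ih x (fun i hi => hx i (Finset.mem_range.mpr (by
            have := Finset.mem_range.mp hi; omega))),
            ih (x-1) (fun i hi => by
              have h2 := hx (i+1) (Finset.mem_range.mpr (by
                have := Finset.mem_range.mp hi; omega))
              intro hc; apply h2; push_cast; linarith)]
          have hA : ∏ i ∈ Finset.range (n+1), (x - 1 - (i:ℚ)) = ∏ i ∈ Finset.range (n+1), (x - ((i+1:ℕ):ℚ)) := by
            refine Finset.prod_congr rfl fun i _ => by push_cast; ring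
          rw [hA]
          have hsplit : ∏ i ∈ Finset.range (n+2), (x - i) = (x - 0) * ∏ i ∈ Finset.range (n+1), (x - ((i+1:ℕ):ℚ)) := by
            rw [Finset.prod_range_succ' (fun i : ℕ => x - (i:ℚ)) (n+1)]
            push_cast
            ring
          have hsplit2 : ∏ i ∈ Finset.range (n+2), (x - i) = (∏ i ∈ Finset.range (n+1), (x - (i:ℚ))) * (x - ((n+1:ℕ):ℚ)) := by
            rw [Finset.prod_range_succ]
          have hne : ∀ i ∈ Finset.range (n+2), x - (i:ℚ) ≠ 0 := hx
          have hP1 : (∏ i ∈ Finset.range (n+1), (x - (i:ℚ))) ≠ 0 :=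
            Finset.prod_ne_zero_iff.mpr (fun i hi => hx i (Finset.mem_range.mpr (by
              have := Finset.mem_range.mp hi; omega)))
          have hP2 : (∏ i ∈ Finset.range (n+1), (x - ((i+1:ℕ):ℚ))) ≠ 0 :=
            Finset.prod_ne_zero_iff.mpr (fun i hi => hx (i+1) (Finset.mem_range.mpr (by
              have := Finset.mem_range.mp hi; omega)))
          have hx0 : x - (0:ℚ) ≠ 0 := by simpa using hx 0 (Finset.mem_range.mpr (by omega))
          have hxn : x - ((n+1:ℕ):ℚ) ≠ 0 := hx (n+1) (Finset.mem_range.mpr (by omega))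
          rw [Nat.factorial_succ]
          rw [div_sub_div _ _ hP1 hP2]
          rw [div_eq_div_iff (by exact mul_ne_zero hP1 hP2) (by rw [hsplit]; exact mul_ne_zero hx0 hP2)]
          have hx0' : (x:ℚ) ≠ 0 := by simpa using hx0
          have hxn' : x - ((n:ℚ)+1) ≠ 0 := by push_cast at hxn; exact hxn
          have hkey : ∏ i ∈ Finset.range (n+1), (x - ((i+1:ℕ):ℚ)) = (∏ i ∈ Finset.range (n+2), (x - i)) / (x - 0) := by
            rw [hsplit, sub_zero, mul_comm, mul_div_assoc, div_self hx0', mul_one]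
          have hkey2 : ∏ i ∈ Finset.range (n+1), (x - (i:ℚ)) = (∏ i ∈ Finset.range (n+2), (x - i)) / (x - ((n+1:ℕ):ℚ)) := by
            push_cast
            rw [hsplit2]
            push_cast
            rw [mul_div_assoc, div_self hxn', mul_one]
          rw [hkey, hkey2]
          have hT : (∏ i ∈ Finset.range (n+2), (x - i)) ≠ 0 := Finset.prod_ne_zero_iff.mpr hne
          field_simp
          push_cast; ring

lemma poch_eq_neg_prod (a : ℚ) (m : ℕ) :
    poch a m = (-1)^m * ∏ i ∈ Finset.range m, (-a - i) := by
  induction m with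
  | zero => simp [poch]
  | succ m ih =>
    rw [poch, Finset.prod_range_succ, ← poch, ih, Finset.prod_range_succ]
    push_cast
    ring


lemma factor_ne (a b : ℚ) : (C a - X - C b : ℚ[X]) ≠ 0 := by
  intro hc
  have h := congrArg (fun p => Polynomial.coeff p 1) hc
  simp [coeff_X_one] at h

lemma factor_natDegree (a b : ℚ) : (C a - X - C b : ℚ[X]).natDegree = 1 := by
  have h : (C a - X - C b : ℚ[X]) = -(X - C (a - b)) := by
    rw [map_sub]
    ring
  rw [h, natDegree_neg, natDegree_X_sub_C]

lemma prod_factor_natDegree (a : ℚ) (g : ℕ → ℚ) (m : ℕ) :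
    (∏ i ∈ Finset.range m, (C a - X - C (g i) : ℚ[X])).natDegree ≤ m := by
  refine le_trans (Polynomial.natDegree_prod_le _ _) ?_
  calc ∑ i ∈ Finset.range m, (C a - X - C (g i) : ℚ[X]).natDegree
      ≤ ∑ _i ∈ Finset.range m, 1 :=
        Finset.sum_le_sum fun i _ => le_of_eq (factor_natDegree _ _)
    _ = m := by simp

lemma main_sum (l1 l2 n m : ℕ) (hn1 : n ≤ l1) (hn2 : n ≤ l2) (hm : m ≤ n) :
    ∑ k ∈ Finset.range (n+1),
      poch (-(n:ℚ)) k * poch ((n:ℚ) - l1 - l2 - 1) k /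
        (poch (-(l1:ℚ)) k * (k.factorial : ℚ)) *
      (poch (-(l1:ℚ)) (k+m) / poch (-(l1:ℚ) - (l2:ℚ)) (k+m)) =
    if m = n then
      (-1:ℚ)^n * (n.factorial : ℚ) * poch (-(l2:ℚ)) n / poch (-(l1:ℚ) - (l2:ℚ)) (2*n)
    else 0 := by
  set A := l1 + l2 with hAdef
  have hA : (-(l1:ℚ) - (l2:ℚ)) = -((A:ℕ):ℚ) := by push_cast [hAdef]; ring
  have h2nA : 2*n ≤ A := by omega
  -- step 1: termwise rewriting
  have hterm : ∀ k ∈ Finset.range (n+1),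
      poch (-(n:ℚ)) k * poch ((n:ℚ) - l1 - l2 - 1) k /
        (poch (-(l1:ℚ)) k * (k.factorial : ℚ)) *
      (poch (-(l1:ℚ)) (k+m) / poch (-(l1:ℚ) - (l2:ℚ)) (k+m))
      = (((A+1-n).factorial : ℚ) / (A.factorial : ℚ)) *
        ((-1:ℚ)^k * (n.choose k) *
          ((∏ i ∈ Finset.range m, ((l1:ℚ) - k - i)) *
            (((A-k-m).factorial : ℚ) / (((A+1-n-k).factorial : ℚ))))) := by
    intro k hk
    have hk' : k ≤ n := by have := Finset.mem_range.mp hk; omega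
    have e1 : poch (-(n:ℚ)) k = (-1)^k * k.factorial * n.choose k := poch_neg_nat_choose hk'
    have e2 : ((n:ℚ) - l1 - l2 - 1) = -(((A+1-n : ℕ)):ℚ) := by
      have : ((A+1-n:ℕ):ℚ) = (A:ℚ) + 1 - n := by
        push_cast [Nat.cast_sub (by omega : n ≤ A+1)]; ring
      rw [this, hAdef]; push_cast; ring
    have e3 : poch ((n:ℚ) - l1 - l2 - 1) k
        = (-1)^k * (((A+1-n).factorial : ℚ) / ((A+1-n-k).factorial : ℚ)) := by
      rw [e2, poch_neg_nat (by omega : k ≤ A+1-n)]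
    have e4 : poch (-(l1:ℚ)) (k+m) = poch (-(l1:ℚ)) k * poch (-(l1:ℚ) + k) m :=
      poch_add _ k m
    have e5 : poch (-(l1:ℚ) + k) m = (-1)^m * ∏ i ∈ Finset.range m, ((l1:ℚ) - k - i) := by
      rw [poch_eq_neg_prod]
      congr 1
      exact Finset.prod_congr rfl fun i _ => by ring
    have e6 : poch (-(l1:ℚ) - (l2:ℚ)) (k+m)
        = (-1)^(k+m) * ((A.factorial : ℚ) / ((A-k-m).factorial : ℚ)) := by
      rw [hA, poch_neg_nat (by omega : k+m ≤ A), show A-(k+m) = A-k-m from by omega]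
    have hpl1 : poch (-(l1:ℚ)) k ≠ 0 := poch_ne_zero (by omega)
    have hf1 : ((k.factorial : ℚ)) ≠ 0 := by exact_mod_cast k.factorial_ne_zero
    have hf2 : ((A.factorial : ℚ)) ≠ 0 := by exact_mod_cast A.factorial_ne_zero
    have hf3 : (((A-k-m).factorial : ℚ)) ≠ 0 := by exact_mod_cast (A-k-m).factorial_ne_zero
    have hf4 : (((A+1-n-k).factorial : ℚ)) ≠ 0 := by exact_mod_cast (A+1-n-k).factorial_ne_zero
    have hf5 : (((A+1-n).factorial : ℚ)) ≠ 0 := by exact_mod_cast (A+1-n).factorial_ne_zero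
    rw [e1, e3, e4, e5, e6]
    field_simp
    ring
  rw [Finset.sum_congr rfl hterm, ← Finset.mul_sum]
  by_cases hmn : m = n
  · -- the m = n case
    subst m
    rw [if_pos rfl]
    set x0 : ℚ := ((A+1-n:ℕ):ℚ) with hx0def
    set Pn : Polynomial ℚ := ∏ i ∈ Finset.range n, (C ((l1:ℚ)) - X - C ((i:ℚ))) with hPndef
    obtain ⟨Q, hQ⟩ := X_sub_C_dvd_sub_C_eval (a := x0) (p := Pn)
    have hx0k : ∀ k ∈ Finset.range (n+1), ((A+1-n-k:ℕ):ℚ) = x0 - k := by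
      intro k hk
      have hk' : k ≤ n := by have := Finset.mem_range.mp hk; omega
      rw [hx0def, Nat.cast_sub (by omega : k ≤ A+1-n)]
    have hx0ne : ∀ k ∈ Finset.range (n+1), x0 - (k:ℚ) ≠ 0 := by
      intro k hk
      rw [← hx0k k hk]
      have : 0 < A+1-n-k := by have := Finset.mem_range.mp hk; omega
      positivity
    have hev : ∀ k ∈ Finset.range (n+1),
        (-1:ℚ)^k * (n.choose k) *
          ((∏ i ∈ Finset.range n, ((l1:ℚ) - k - i)) *
            (((A-k-n).factorial : ℚ) / (((A+1-n-k).factorial : ℚ))))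
        = -((-1:ℚ)^k * (n.choose k) * Q.eval (k:ℚ))
          + Pn.eval x0 * ((-1:ℚ)^k * (n.choose k) / (x0 - k)) := by
      intro k hk
      have hk' : k ≤ n := by have := Finset.mem_range.mp hk; omega
      have hd : (((A-k-n).factorial : ℚ) / (((A+1-n-k).factorial : ℚ))) = 1 / (x0 - k) := by
        rw [show A+1-n-k = (A-k-n)+1 from by omega, Nat.factorial_succ]
        rw [show ((((A-k-n)+1) * (A-k-n).factorial : ℕ):ℚ)
            = (((A-k-n)+1 : ℕ):ℚ) * ((A-k-n).factorial : ℚ) from by push_cast; ring]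
        rw [show (((A-k-n)+1:ℕ)) = A+1-n-k from by omega, hx0k k hk]
        have hf : (((A-k-n).factorial : ℚ)) ≠ 0 := by exact_mod_cast (A-k-n).factorial_ne_zero
        rw [mul_comm, div_mul_eq_div_div, div_self hf]
      have hPk : Pn.eval (k:ℚ) = ((k:ℚ) - x0) * Q.eval (k:ℚ) + Pn.eval x0 := by
        have h := congrArg (Polynomial.eval ((k:ℚ))) hQ
        simp only [eval_sub, eval_mul, eval_C, eval_X] at h
        linarith
      have hPkprod : ∏ i ∈ Finset.range n, ((l1:ℚ) - k - i) = Pn.eval (k:ℚ) := by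
        rw [hPndef]
        simp only [eval_prod, eval_sub, eval_C, eval_X]
      rw [hd, hPkprod, hPk]
      have hne := hx0ne k hk
      field_simp
      ring
    rw [Finset.sum_congr rfl hev, Finset.sum_add_distrib]
    have hs1 : ∑ k ∈ Finset.range (n+1), -((-1:ℚ)^k * (n.choose k) * Q.eval (k:ℚ)) = 0 := by
      rw [Finset.sum_neg_distrib]
      rw [alt_sum_poly n Q ?hdegQ, neg_zero]
      case hdegQ =>
        by_cases hQ0 : Q = 0
        · rw [hQ0, degree_zero]; exact WithBot.bot_lt_coe n
        · have hnz : (X - C x0) * Q ≠ 0 := mul_ne_zero (X_sub_C_ne_zero x0) hQ0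
          have hdm : ((X - C x0) * Q).natDegree = 1 + Q.natDegree := by
            rw [natDegree_mul (X_sub_C_ne_zero x0) hQ0, natDegree_X_sub_C]
          have hub : (Pn - C (Pn.eval x0)).natDegree ≤ n := by
            refine le_trans (natDegree_sub_le _ _) (max_le ?_ ?_)
            · exact prod_factor_natDegree _ _ _
            · simp [natDegree_C]
          rw [hQ, hdm] at hub
          exact (natDegree_lt_iff_degree_lt hQ0).mp (by exact_mod_cast by omega)
    have hs2 : ∑ k ∈ Finset.range (n+1), Pn.eval x0 * ((-1:ℚ)^k * (n.choose k) / (x0 - k))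
        = Pn.eval x0 * ((-1:ℚ)^n * n.factorial / ∏ i ∈ Finset.range (n+1), (x0 - i)) := by
      rw [← Finset.mul_sum, alt_sum_inv n x0 hx0ne]
    rw [hs1, hs2, zero_add]
    have hprod : ∏ i ∈ Finset.range (n+1), (x0 - (i:ℚ))
        = ((A+1-n).factorial : ℚ) / ((A-2*n).factorial : ℚ) := by
      have hps := prod_desc (n+1) (A-2*n)
      rw [show (A-2*n)+(n+1) = A+1-n from by omega] at hps
      rw [← hps]
    have hevx0 : Pn.eval x0 = poch (-(l2:ℚ)) n := by
      rw [hPndef]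
      simp only [eval_prod, eval_sub, eval_C, eval_X]
      rw [poch, ← Finset.prod_range_reflect (fun j : ℕ => -(l2:ℚ) + j) n]
      refine Finset.prod_congr rfl fun i hi => ?_
      have hi' : i < n := Finset.mem_range.mp hi
      rw [hx0def, Nat.cast_sub (by omega : n ≤ A+1), Nat.cast_sub (by omega : i ≤ n-1),
        Nat.cast_sub (by omega : 1 ≤ n)]
      push_cast [hAdef]
      ring
    have hR : poch (-(l1:ℚ) - (l2:ℚ)) (2*n) = (-1:ℚ)^(2*n) * ((A.factorial : ℚ) / ((A-2*n).factorial : ℚ)) := by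
      rw [hA, poch_neg_nat h2nA]
    rw [hprod, hevx0, hR]
    have hf2 : ((A.factorial : ℚ)) ≠ 0 := by exact_mod_cast A.factorial_ne_zero
    have hf5 : (((A+1-n).factorial : ℚ)) ≠ 0 := by exact_mod_cast (A+1-n).factorial_ne_zero
    have hf6 : (((A-2*n).factorial : ℚ)) ≠ 0 := by exact_mod_cast (A-2*n).factorial_ne_zero
    rw [pow_mul]
    norm_num
    field_simp
  · -- the m < n case
    rw [if_neg hmn]
    have hmlt : m < n := lt_of_le_of_ne hm hmn
    set P : Polynomial ℚ :=
      (∏ i ∈ Finset.range m, (C ((l1:ℚ)) - X - C ((i:ℚ)))) *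
      (∏ i ∈ Finset.range (n-1-m), (C (((A-m:ℕ)):ℚ) - X - C ((i:ℚ)))) with hPdef
    have hev : ∀ k ∈ Finset.range (n+1),
        (-1:ℚ)^k * (n.choose k) *
          ((∏ i ∈ Finset.range m, ((l1:ℚ) - k - i)) *
            (((A-k-m).factorial : ℚ) / (((A+1-n-k).factorial : ℚ))))
        = (-1:ℚ)^k * (n.choose k) * P.eval (k:ℚ) := by
      intro k hk
      have hk' : k ≤ n := by have := Finset.mem_range.mp hk; omega
      have hd : (((A-k-m).factorial : ℚ) / (((A+1-n-k).factorial : ℚ)))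
          = ∏ i ∈ Finset.range (n-1-m), ((((A-m:ℕ)):ℚ) - k - i) := by
        have hps := prod_desc (n-1-m) (A+1-n-k)
        have hc : (A+1-n-k) + (n-1-m) = A-k-m := by omega
        rw [hc] at hps
        rw [← hps]
        refine Finset.prod_congr rfl fun i _ => ?_
        have c1 : ((A-k-m:ℕ):ℚ) = ((A-m:ℕ):ℚ) - k := by
          rw [Nat.cast_sub (by omega : m ≤ A-k), Nat.cast_sub (by omega : k ≤ A),
            Nat.cast_sub (by omega : m ≤ A)]
          ring
        rw [c1]
      rw [hd, hPdef]
      simp only [eval_mul, eval_prod, eval_sub, eval_C, eval_X]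
    rw [Finset.sum_congr rfl hev]
    have hdeg : P.degree < (n : WithBot ℕ) := by
      have hne : P ≠ 0 := by
        rw [hPdef]
        exact mul_ne_zero
          (Finset.prod_ne_zero_iff.mpr fun i _ => factor_ne _ _)
          (Finset.prod_ne_zero_iff.mpr fun i _ => factor_ne _ _)
      have h1 : P.natDegree ≤ m + (n-1-m) := by
        rw [hPdef]
        exact le_trans natDegree_mul_le
          (add_le_add (prod_factor_natDegree _ _ _) (prod_factor_natDegree _ _ _))
      exact (natDegree_lt_iff_degree_lt hne).mp (by omega)
    rw [alt_sum_poly n P hdeg, mul_zero]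

end AuxLemmas

/-- The polynomial `Gₙ` (normalized Jacobi with negative integer parameters). -/
noncomputable def jacGpoly (l1 l2 : ℕ) (n : ℕ) : Polynomial ℚ :=
  ∑ k ∈ Finset.range (n + 1),
    C (poch (-(n : ℚ)) k * poch ((n : ℚ) - l1 - l2 - 1) k /
        (poch (-(l1 : ℚ)) k * (k.factorial : ℚ))) *
      ((1 - X) * C (1 / 2)) ^ k

theorem functional_jacG (l1 l2 : ℕ) (h1 : 0 < l1) (h2 : 0 < l2)
    (L : Polynomial ℚ →ₗ[ℚ] ℚ)
    (hL : ∀ m : ℕ, m ≤ l1 + l2 →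
      L (((1 - X) * C (1 / 2)) ^ m) =
        poch (-(l1 : ℚ)) m / poch (-(l1 : ℚ) - (l2 : ℚ)) m)
    (n : ℕ) (hn : n ≤ min l1 l2) :
    (∀ m : ℕ, m < n → L (jacGpoly l1 l2 n * ((1 - X) * C (1 / 2)) ^ m) = 0) ∧
    L (jacGpoly l1 l2 n * ((1 - X) * C (1 / 2)) ^ n) =
      (-1) ^ n * (n.factorial : ℚ) * poch (-(l2 : ℚ)) n /
        poch (-(l1 : ℚ) - (l2 : ℚ)) (2 * n) := by
  obtain ⟨hn1, hn2⟩ := le_min_iff.mp hn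
  have key : ∀ m : ℕ, m ≤ n →
      L (jacGpoly l1 l2 n * ((1 - X) * C (1 / 2)) ^ m) =
      (if m = n then
        (-1:ℚ)^n * (n.factorial : ℚ) * poch (-(l2:ℚ)) n / poch (-(l1:ℚ) - (l2:ℚ)) (2*n)
      else 0) := by
    intro m hm
    rw [← main_sum l1 l2 n m hn1 hn2 hm]
    rw [jacGpoly, Finset.sum_mul]
    have hterm : ∀ k ∈ Finset.range (n+1),
        (C (poch (-(n:ℚ)) k * poch ((n:ℚ) - l1 - l2 - 1) k /
            (poch (-(l1:ℚ)) k * (k.factorial:ℚ))) *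
          ((1 - X) * C (1/2)) ^ k) * ((1 - X) * C (1/2)) ^ m
        = (poch (-(n:ℚ)) k * poch ((n:ℚ) - l1 - l2 - 1) k /
            (poch (-(l1:ℚ)) k * (k.factorial:ℚ)))
            • (((1 - X) * C (1/2)) ^ (k+m)) := by
      intro k _
      rw [Polynomial.smul_eq_C_mul, pow_add]
      ring
    rw [Finset.sum_congr rfl hterm, map_sum]
    refine Finset.sum_congr rfl fun k hk => ?_
    rw [LinearMap.map_smul, smul_eq_mul, hL (k+m) (by have := Finset.mem_range.mp hk; omega)]
  constructor
  · intro m hmlt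
    rw [key m (le_of_lt hmlt), if_neg (by omega)]
  · rw [key n le_rfl, if_pos rfl]
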